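/- Let G be a triangle-free graph of diameter 2 such that every pair of non-adjacent vertices has exactly one common neighbour, and let S be a mutual-visibility set of size s. Then C(s,2) − e(S) = Σ_{w ∈ V(G)\S} C(|N(w) ∩ S|, 2). -/

import Mathlib

open scoped Classical

def SimpleGraph.MutualVisibilitySet {V : Type*} (G : SimpleGraph V) (S : Set V) : Prop :=
  ∀ u ∈ S, ∀ v ∈ S, ∃ p : G.Walk u v, p.length = G.dist u v ∧
    ∀ w ∈ p.support, w ∈ S → w = u ∨ w = v

noncomputable def edgesWithin {V : Type*} (G : SimpleGraph V) (S : Set V) : ℕ :=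
  {e ∈ G.edgeSet | ∀ v ∈ e, v ∈ S}.ncard

open SimpleGraph Finset in
/-- The unique common neighbour of a non-adjacent pair of a mutual-visibility set
is not in the set. -/
lemma aux_cn_not_mem {V : Type*} [DecidableEq V] (G : SimpleGraph V) (S : Finset V)
    (hS : G.MutualVisibilitySet ↑S) {u v w : V} (hu : u ∈ S) (hv : v ∈ S)
    (hne : u ≠ v) (hnadj : ¬ G.Adj u v)
    (huw : G.Adj u w) (hwv : G.Adj w v)
    (huniqw : ∀ x, G.Adj u x ∧ G.Adj x v → x = w) : w ∉ S := by
  have hdist : G.dist u v = 2 := by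
    have hle : G.dist u v ≤ 2 :=
      (G.dist_le (SimpleGraph.Walk.cons huw (SimpleGraph.Walk.cons hwv SimpleGraph.Walk.nil)))
    have hpos : 0 < G.dist u v :=
      SimpleGraph.Reachable.pos_dist_of_ne ⟨SimpleGraph.Walk.cons huw
        (SimpleGraph.Walk.cons hwv SimpleGraph.Walk.nil)⟩ hne
    have h1 : G.dist u v ≠ 1 := fun h => hnadj (SimpleGraph.dist_eq_one_iff_adj.mp h)
    omega
  obtain ⟨p, hlen, hint⟩ := hS u hu v hv
  rw [hdist] at hlen
  set x := p.getVert 1 with hx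
  have hux : G.Adj u x := by
    have := p.adj_getVert_succ (i := 0) (by omega)
    rwa [p.getVert_zero] at this
  have hxv : G.Adj x v := by
    have := p.adj_getVert_succ (i := 1) (by omega)
    rwa [show p.getVert 2 = v by rw [← hlen]; exact p.getVert_length] at this
  have hxsup : x ∈ p.support :=
    SimpleGraph.Walk.mem_support_iff_exists_getVert.mpr ⟨1, rfl, by omega⟩
  have hxw : x = w := huniqw x ⟨hux, hxv⟩
  intro hwS
  rcases hint x hxsup (by rw [hxw]; exact_mod_cast hwS) with h | h
  · exact hux.ne (h.symm)
  · exact hxv.ne h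

noncomputable def sym2ToFinset {V : Type*} [DecidableEq V] : Sym2 V → Finset V :=
  Sym2.lift ⟨fun a b => {a, b}, fun a b => Finset.pair_comm a b⟩

lemma mem_sym2ToFinset {V : Type*} [DecidableEq V] (e : Sym2 V) (x : V) :
    x ∈ sym2ToFinset e ↔ x ∈ e := by
  induction e using Sym2.inductionOn with
  | hf a b => simp [sym2ToFinset, Sym2.mem_iff]

theorem stmt2 {V : Type*} [Fintype V] [DecidableEq V] (G : SimpleGraph V)
    (htf : G.CliqueFree 3) (hdiam : G.diam = 2)
    (huniq : ∀ u v : V, u ≠ v → ¬ G.Adj u v → ∃! w, G.Adj u w ∧ G.Adj w v)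
    (S : Finset V) (hS : G.MutualVisibilitySet ↑S) :
    S.card.choose 2 - edgesWithin G ↑S =
      ∑ w ∈ Sᶜ, ({u ∈ (S : Set V) | G.Adj w u}.ncard).choose 2 := by
  classical
  set T : Finset (Finset V) := S.powersetCard 2 with hT
  set pred : Finset V → Prop := fun p => ∃ u ∈ p, ∃ v ∈ p, G.Adj u v with hpred
  set Ta : Finset (Finset V) := T.filter pred with hTa
  set Tn : Finset (Finset V) := T.filter (fun p => ¬ pred p) with hTn
  -- basic facts about members of T
  have hTmem : ∀ p ∈ T, ∃ a b : V, a ≠ b ∧ a ∈ S ∧ b ∈ S ∧ p = {a, b} := by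
    intro p hp
    rw [hT, Finset.mem_powersetCard] at hp
    obtain ⟨a, b, hab, hpab⟩ := Finset.card_eq_two.mp hp.2
    exact ⟨a, b, hab, hp.1 (hpab ▸ Finset.mem_insert_self a {b}),
      hp.1 (hpab ▸ Finset.mem_insert_of_mem (Finset.mem_singleton_self b)), hpab⟩
  -- Step A: total count
  have hA : T.card = S.card.choose 2 := Finset.card_powersetCard 2 S
  -- split
  have hsplit : Ta.card + Tn.card = T.card :=
    Finset.card_filter_add_card_filter_not (p := pred)
  -- Step B: edgesWithin = Ta.card
  have hB : edgesWithin G ↑S = Ta.card := by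
    have hset : {e ∈ G.edgeSet | ∀ v ∈ e, v ∈ (S : Set V)} =
        ↑(Finset.univ.filter (fun e : Sym2 V => e ∈ G.edgeSet ∧ ∀ v ∈ e, v ∈ S)) := by
      ext e; simp
    rw [edgesWithin, hset, Set.ncard_coe_finset]
    apply Finset.card_bij (fun e _ => sym2ToFinset e)
    · intro e he
      rw [Finset.mem_filter] at he
      obtain ⟨-, hadj, hsub⟩ := he
      induction e using Sym2.inductionOn with
      | hf a b =>
        rw [SimpleGraph.mem_edgeSet G] at hadj
        rw [hTa, Finset.mem_filter, hT, Finset.mem_powersetCard]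
        refine ⟨⟨?_, ?_⟩, a, ?_, b, ?_, hadj⟩
        · intro x hx
          rw [mem_sym2ToFinset] at hx
          exact hsub x hx
        · show (sym2ToFinset s(a, b)).card = 2
          show ({a, b} : Finset V).card = 2
          exact Finset.card_pair hadj.ne
        · rw [mem_sym2ToFinset]; exact Sym2.mem_mk_left a b
        · rw [mem_sym2ToFinset]; exact Sym2.mem_mk_right a b
    · intro e he e' he' heq
      induction e using Sym2.inductionOn with
      | hf a b =>
        induction e' using Sym2.inductionOn with
        | hf c d =>
          rw [Finset.mem_filter] at he he'
          have hab : G.Adj a b := (SimpleGraph.mem_edgeSet G).mp he.2.1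
          have hcd : G.Adj c d := (SimpleGraph.mem_edgeSet G).mp he'.2.1
          have h1 : a ∈ ({c, d} : Finset V) := by
            rw [show ({c, d} : Finset V) = sym2ToFinset s(c, d) from rfl, ← heq]
            exact Finset.mem_insert_self a {b}
          have h2 : b ∈ ({c, d} : Finset V) := by
            rw [show ({c, d} : Finset V) = sym2ToFinset s(c, d) from rfl, ← heq]
            exact Finset.mem_insert_of_mem (Finset.mem_singleton_self b)
          simp only [Finset.mem_insert, Finset.mem_singleton] at h1 h2
          rw [Sym2.eq_iff]
          rcases h1 with h1 | h1 <;> rcases h2 with h2 | h2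
          · exact absurd (h1.trans h2.symm) hab.ne
          · exact Or.inl ⟨h1, h2⟩
          · exact Or.inr ⟨h1, h2⟩
          · exact absurd (h1.trans h2.symm) hab.ne
    · intro p hp
      obtain ⟨a, b, hab, ha, hb, hpab⟩ := hTmem p (Finset.mem_filter.mp hp).1
      have hadjp := (Finset.mem_filter.mp hp).2
      obtain ⟨u, hu, v, hv, huv⟩ := hadjp
      rw [hpab] at hu hv
      simp only [Finset.mem_insert, Finset.mem_singleton] at hu hv
      have hadjab : G.Adj a b := by
        rcases hu with rfl | rfl <;> rcases hv with rfl | rfl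
        · exact absurd rfl huv.ne
        · exact huv
        · exact huv.symm
        · exact absurd rfl huv.ne
      refine ⟨s(a, b), ?_, hpab.symm⟩
      rw [Finset.mem_filter]
      refine ⟨Finset.mem_univ _, (SimpleGraph.mem_edgeSet G).mpr hadjab, ?_⟩
      intro x hx
      rcases Sym2.mem_iff.mp hx with rfl | rfl
      · exact ha
      · exact hb
  -- Step C: Tn as a disjoint union over common neighbours
  have hCset : Tn = Sᶜ.biUnion (fun w => (S.filter (fun u => G.Adj w u)).powersetCard 2) := by
    ext p
    constructor
    · intro hp
      rw [hTn, Finset.mem_filter] at hp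
      obtain ⟨hpT, hnp⟩ := hp
      obtain ⟨a, b, hab, ha, hb, hpab⟩ := hTmem p hpT
      have hnadj : ¬ G.Adj a b := by
        intro h
        exact hnp ⟨a, hpab ▸ Finset.mem_insert_self a {b}, b,
          hpab ▸ Finset.mem_insert_of_mem (Finset.mem_singleton_self b), h⟩
      obtain ⟨w, ⟨haw, hwb⟩, hwu⟩ := huniq a b hab hnadj
      have hwS : w ∉ S := aux_cn_not_mem G S hS ha hb hab hnadj haw hwb
        (fun x hx => hwu x hx)
      rw [Finset.mem_biUnion]
      refine ⟨w, Finset.mem_compl.mpr hwS, ?_⟩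
      rw [Finset.mem_powersetCard]
      constructor
      · rw [hpab]
        intro x hx
        simp only [Finset.mem_insert, Finset.mem_singleton] at hx
        rcases hx with rfl | rfl
        · exact Finset.mem_filter.mpr ⟨ha, haw.symm⟩
        · exact Finset.mem_filter.mpr ⟨hb, hwb⟩
      · rw [hpab]; exact Finset.card_pair hab
    · intro hp
      rw [Finset.mem_biUnion] at hp
      obtain ⟨w, hw, hp⟩ := hp
      rw [Finset.mem_powersetCard] at hp
      obtain ⟨hsub, hcard⟩ := hp
      rw [hTn, Finset.mem_filter]
      constructor
      · rw [hT, Finset.mem_powersetCard]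
        exact ⟨fun x hx => (Finset.mem_filter.mp (hsub hx)).1, hcard⟩
      · rintro ⟨u, hu, v, hv, huv⟩
        have hwu : G.Adj w u := (Finset.mem_filter.mp (hsub hu)).2
        have hwv : G.Adj w v := (Finset.mem_filter.mp (hsub hv)).2
        exact htf {w, u, v} (SimpleGraph.is3Clique_triple_iff.mpr ⟨hwu, hwv, huv⟩)
  have hCdisj : ((Sᶜ : Finset V) : Set V).PairwiseDisjoint
      (fun w => (S.filter (fun u => G.Adj w u)).powersetCard 2) := by
    intro w hw w' hw' hne
    rw [Function.onFun, Finset.disjoint_left]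
    intro p hp hp'
    rw [Finset.mem_powersetCard] at hp hp'
    obtain ⟨a, b, hab, hpab⟩ := Finset.card_eq_two.mp hp.2
    have haf := hp.1 (hpab ▸ Finset.mem_insert_self a {b})
    have hbf := hp.1 (hpab ▸ Finset.mem_insert_of_mem (Finset.mem_singleton_self b))
    have haf' := hp'.1 (hpab ▸ Finset.mem_insert_self a {b})
    have hbf' := hp'.1 (hpab ▸ Finset.mem_insert_of_mem (Finset.mem_singleton_self b))
    rw [Finset.mem_filter] at haf hbf haf' hbf'
    have hnadj : ¬ G.Adj a b := fun h =>
      htf {w, a, b} (SimpleGraph.is3Clique_triple_iff.mpr ⟨haf.2, hbf.2, h⟩)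
    obtain ⟨z, -, hzu⟩ := huniq a b hab hnadj
    exact hne ((hzu w ⟨haf.2.symm, hbf.2⟩).trans (hzu w' ⟨haf'.2.symm, hbf'.2⟩).symm)
  have hC : Tn.card = ∑ w ∈ Sᶜ, ((S.filter (fun u => G.Adj w u)).card).choose 2 := by
    rw [hCset, Finset.card_biUnion (fun w hw w' hw' h => hCdisj hw hw' h)]
    exact Finset.sum_congr rfl (fun w _ => Finset.card_powersetCard 2 _)
  -- Step D: rewrite RHS
  have hD : ∀ w : V, {u ∈ (S : Set V) | G.Adj w u}.ncard =
      (S.filter (fun u => G.Adj w u)).card := by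
    intro w
    rw [show {u ∈ (S : Set V) | G.Adj w u} = ↑(S.filter (fun u => G.Adj w u)) by
      ext x; simp]
    exact Set.ncard_coe_finset _
  calc S.card.choose 2 - edgesWithin G ↑S = (Ta.card + Tn.card) - Ta.card := by
        rw [hsplit, hA, hB]
    _ = Tn.card := by omega
    _ = ∑ w ∈ Sᶜ, ((S.filter (fun u => G.Adj w u)).card).choose 2 := hC
    _ = ∑ w ∈ Sᶜ, ({u ∈ (S : Set V) | G.Adj w u}.ncard).choose 2 := by
        exact Finset.sum_congr rfl (fun w _ => by rw [hD w])
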